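/- Let f : ℝ → ℝ be three times differentiable on (0,∞) with f'(u) ≠ 0 and f''(u) ≠ 0 for all u > 0, and set B(u) = (1/(2f''(u)))·((f'(u) + u f''(u))/(u f'(u)) − f'''(u)/f''(u)). Then there exist real numbers λ and μ with B(u) − 1/f'(u) = λ u and B(u) f'(u) + 1 = μ f(u) for all u > 0 if and only if f''(u) + f'(u)/u = 0 for all u > 0, i.e. if and only if the surface of revolution r(u,v) = (u sinh v, u cosh v, f(u)) is semi-isotropic minimal; equivalently, if and only if f(u) = c₁ ln u + c₂ for some constants c₁ ≠ 0, c₂ ∈ ℝ. -/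

import Mathlib

open Set Filter

lemma const_Ioi (g : ℝ → ℝ) (hg : ∀ u ∈ Set.Ioi (0:ℝ), HasDerivAt g 0 u)
    {x y : ℝ} (hx : x ∈ Set.Ioi (0:ℝ)) (hy : y ∈ Set.Ioi (0:ℝ)) : g x = g y := by
  apply (convex_Ioi (0:ℝ)).is_const_of_fderivWithin_eq_zero (𝕜 := ℝ)
    (fun u hu => (hg u hu).differentiableAt.differentiableWithinAt) _ hx hy
  intro z hz
  rw [fderivWithin_of_isOpen isOpen_Ioi hz]
  ext
  simp [(hg z hz).hasFDerivAt.fderiv]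

lemma deriv_eq_on {g h : ℝ → ℝ} (heq : ∀ x ∈ Set.Ioi (0:ℝ), g x = h x)
    {u : ℝ} (hu : u ∈ Set.Ioi (0:ℝ)) : deriv g u = deriv h u :=
  Filter.EventuallyEq.deriv_eq (Filter.eventuallyEq_of_mem (isOpen_Ioi.mem_nhds hu) heq)

lemma hasDerivAt_eq_on {g h : ℝ → ℝ} {d : ℝ} (heq : ∀ x ∈ Set.Ioi (0:ℝ), g x = h x)
    {u : ℝ} (hu : u ∈ Set.Ioi (0:ℝ)) (hd : HasDerivAt g d u) : HasDerivAt h d u :=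
  hd.congr_of_eventuallyEq
    (Filter.eventuallyEq_of_mem (isOpen_Ioi.mem_nhds hu) (fun x hx => (heq x hx).symm))

/-- minimal implies f'(u) = f'(1)/u -/
lemma min_deriv (f : ℝ → ℝ)
    (hf' : ∀ u ∈ Set.Ioi (0 : ℝ), DifferentiableAt ℝ (deriv f) u)
    (hmin : ∀ u ∈ Set.Ioi (0 : ℝ), deriv (deriv f) u + deriv f u / u = 0) :
    ∀ u ∈ Set.Ioi (0:ℝ), deriv f u = deriv f 1 / u := by
  have h1m : (1:ℝ) ∈ Set.Ioi (0:ℝ) := by norm_num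
  have hg0 : ∀ u ∈ Set.Ioi (0:ℝ), HasDerivAt (fun x => x * deriv f x) 0 u := by
    intro u hu
    have hne : u ≠ 0 := ne_of_gt hu
    have h := (hasDerivAt_id u).mul ((hf' u hu).hasDerivAt)
    have hm := hmin u hu
    simp only [id_eq] at h
    have e : 1 * deriv f u + u * deriv (deriv f) u = 0 := by field_simp at hm; linarith
    rw [e] at h
    exact h
  intro u hu
  have hne : u ≠ 0 := ne_of_gt hu
  have := const_Ioi _ hg0 hu h1m
  simp only [one_mul] at this
  field_simp
  linarith [this]

lemma min_to_log (f : ℝ → ℝ)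
    (hf : ∀ u ∈ Set.Ioi (0 : ℝ), DifferentiableAt ℝ f u)
    (hf' : ∀ u ∈ Set.Ioi (0 : ℝ), DifferentiableAt ℝ (deriv f) u)
    (h1 : ∀ u ∈ Set.Ioi (0 : ℝ), deriv f u ≠ 0)
    (hmin : ∀ u ∈ Set.Ioi (0 : ℝ), deriv (deriv f) u + deriv f u / u = 0) :
    ∃ c₁ c₂ : ℝ, c₁ ≠ 0 ∧ ∀ u ∈ Set.Ioi (0 : ℝ), f u = c₁ * Real.log u + c₂ := by
  have h1m : (1:ℝ) ∈ Set.Ioi (0:ℝ) := by norm_num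
  set c₁ := deriv f 1 with hc₁
  have hd1 := min_deriv f hf' hmin
  refine ⟨c₁, f 1, h1 1 h1m, fun u hu => ?_⟩
  have hg0 : ∀ u ∈ Set.Ioi (0:ℝ), HasDerivAt (fun x => f x - c₁ * Real.log x) 0 u := by
    intro u hu
    have hne : u ≠ 0 := ne_of_gt hu
    have h := (hf u hu).hasDerivAt.sub ((Real.hasDerivAt_log hne).const_mul c₁)
    have e : deriv f u - c₁ * u⁻¹ = 0 := by rw [hd1 u hu, hc₁, div_eq_mul_inv, sub_self]
    rw [e] at h
    exact h
  have := const_Ioi _ hg0 hu h1m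
  simp only [Real.log_one, mul_zero, sub_zero] at this
  linarith

lemma log_d1 (f : ℝ → ℝ) (c₁ c₂ : ℝ)
    (heq : ∀ u ∈ Set.Ioi (0 : ℝ), f u = c₁ * Real.log u + c₂) :
    ∀ u ∈ Set.Ioi (0:ℝ), deriv f u = c₁ / u := by
  intro u hu
  have hne : u ≠ 0 := ne_of_gt hu
  rw [deriv_eq_on heq hu,
    (((Real.hasDerivAt_log hne).const_mul c₁).add_const c₂).deriv]
  field_simp

lemma log_d2 (f : ℝ → ℝ) (c₁ c₂ : ℝ)
    (heq : ∀ u ∈ Set.Ioi (0 : ℝ), f u = c₁ * Real.log u + c₂) :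
    ∀ u ∈ Set.Ioi (0:ℝ), deriv (deriv f) u = -c₁ / u^2 := by
  intro u hu
  have hne : u ≠ 0 := ne_of_gt hu
  rw [deriv_eq_on (log_d1 f c₁ c₂ heq) hu]
  have H : HasDerivAt (fun x : ℝ => c₁ / x) (c₁ * -(u^2)⁻¹) u := by
    simpa [div_eq_mul_inv] using (hasDerivAt_inv hne).const_mul c₁
  rw [H.deriv]
  field_simp

lemma log_d3 (f : ℝ → ℝ) (c₁ c₂ : ℝ)
    (heq : ∀ u ∈ Set.Ioi (0 : ℝ), f u = c₁ * Real.log u + c₂) :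
    ∀ u ∈ Set.Ioi (0:ℝ), deriv (deriv (deriv f)) u = 2 * c₁ / u^3 := by
  intro u hu
  have hne : u ≠ 0 := ne_of_gt hu
  rw [deriv_eq_on (log_d2 f c₁ c₂ heq) hu]
  have H : HasDerivAt (fun x : ℝ => -c₁ / x^2) (-c₁ * (-(2*u^1) / (u^2)^2)) u := by
    simpa [div_eq_mul_inv, mul_comm] using
      (((hasDerivAt_pow 2 u).inv (pow_ne_zero 2 hne)).const_mul (-c₁))
  rw [H.deriv]
  field_simp


/-- The auxiliary function
`B(u) = (1/(2f''(u)))·((f'(u) + u f''(u))/(u f'(u)) − f'''(u)/f''(u))`. -/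
noncomputable def Bfun (f : ℝ → ℝ) (u : ℝ) : ℝ :=
  (1 / (2 * deriv (deriv f) u)) *
    ((deriv f u + u * deriv (deriv f) u) / (u * deriv f u) -
      deriv (deriv (deriv f)) u / deriv (deriv f) u)

/-- For `f` three times differentiable on `(0,∞)` with `f' ≠ 0`, `f'' ≠ 0`: the
coordinate functions of the surface of revolution are `Δ^{II}`-eigenfunctions (i.e.
there exist `λ, μ` with `B(u) − 1/f'(u) = λu` and `B(u) f'(u) + 1 = μ f(u)` on `(0,∞)`)
iff `f''(u) + f'(u)/u = 0` on `(0,∞)` (the surface is semi-isotropic minimal), and this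
holds iff `f(u) = c₁ ln u + c₂` for some `c₁ ≠ 0`, `c₂`. -/
theorem lapII_eigen_iff_minimal
    (f : ℝ → ℝ)
    (hf : ∀ u ∈ Set.Ioi (0 : ℝ), DifferentiableAt ℝ f u)
    (hf' : ∀ u ∈ Set.Ioi (0 : ℝ), DifferentiableAt ℝ (deriv f) u)
    (hf'' : ∀ u ∈ Set.Ioi (0 : ℝ), DifferentiableAt ℝ (deriv (deriv f)) u)
    (h1 : ∀ u ∈ Set.Ioi (0 : ℝ), deriv f u ≠ 0)
    (h2 : ∀ u ∈ Set.Ioi (0 : ℝ), deriv (deriv f) u ≠ 0) :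
    ((∃ lam mu : ℝ,
        (∀ u ∈ Set.Ioi (0 : ℝ), Bfun f u - 1 / deriv f u = lam * u) ∧
        (∀ u ∈ Set.Ioi (0 : ℝ), Bfun f u * deriv f u + 1 = mu * f u)) ↔
      (∀ u ∈ Set.Ioi (0 : ℝ), deriv (deriv f) u + deriv f u / u = 0)) ∧
    ((∀ u ∈ Set.Ioi (0 : ℝ), deriv (deriv f) u + deriv f u / u = 0) ↔
      (∃ c₁ c₂ : ℝ, c₁ ≠ 0 ∧ ∀ u ∈ Set.Ioi (0 : ℝ), f u = c₁ * Real.log u + c₂)) := by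
  have h1m : (1:ℝ) ∈ Set.Ioi (0:ℝ) := by norm_num
  constructor
  · constructor
    · rintro ⟨lam, mu, hL, hM⟩
      -- derived eigen-relation
      have E : ∀ u ∈ Set.Ioi (0:ℝ), lam * (u * deriv f u) + 2 = mu * f u := by
        intro u hu
        have h := h1 u hu
        have hB : Bfun f u = lam * u + 1 / deriv f u := by linarith [hL u hu]
        have e2 := hM u hu
        rw [hB] at e2
        have hcc : 1 / deriv f u * deriv f u = 1 := one_div_mul_cancel h
        linear_combination e2 - hcc
      have Ei : ∀ u ∈ Set.Ioi (0:ℝ),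
          lam * (deriv f u + u * deriv (deriv f) u) = mu * deriv f u := by
        intro u hu
        have HL : HasDerivAt (fun x => lam * (x * deriv f x) + 2)
            (lam * (1 * deriv f u + u * deriv (deriv f) u)) u :=
          (((hasDerivAt_id u).mul (hf' u hu).hasDerivAt).const_mul lam).add_const 2
        have HR : HasDerivAt (fun x => mu * f x) (mu * deriv f u) u :=
          ((hf u hu).hasDerivAt).const_mul mu
        have h := (hasDerivAt_eq_on E hu HL).unique HR
        simp only [id_eq, one_mul] at h
        exact h
      have Eii : ∀ u ∈ Set.Ioi (0:ℝ),
          lam * (2 * deriv (deriv f) u + u * deriv (deriv (deriv f)) u)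
            = mu * deriv (deriv f) u := by
        intro u hu
        have HL : HasDerivAt (fun x => lam * (deriv f x + x * deriv (deriv f) x))
            (lam * (deriv (deriv f) u + (1 * deriv (deriv f) u + u * deriv (deriv (deriv f)) u))) u :=
          ((hf' u hu).hasDerivAt.add
            ((hasDerivAt_id u).mul (hf'' u hu).hasDerivAt)).const_mul lam
        have HR : HasDerivAt (fun x => mu * deriv f x) (mu * deriv (deriv f) u) u :=
          ((hf' u hu).hasDerivAt).const_mul mu
        have h := (hasDerivAt_eq_on Ei hu HL).unique HR
        simp only [id_eq, one_mul] at h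
        linear_combination h
      have hlam : lam ≠ 0 := by
        intro h0
        have e := Ei 1 h1m
        rw [h0, zero_mul] at e
        rcases mul_eq_zero.mp e.symm with e1 | e1
        · have e2 := E 1 h1m
          rw [h0, e1] at e2
          norm_num at e2
        · exact h1 1 h1m e1
      intro u hu
      have hne : u ≠ 0 := ne_of_gt hu
      by_cases hmu : mu = 0
      · have e := Ei u hu
        rw [hmu, zero_mul] at e
        have e' : deriv f u + u * deriv (deriv f) u = 0 :=
          by rcases mul_eq_zero.mp e with h' | h'; exact absurd h' hlam; exact h'
        field_simp
        linear_combination e'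
      · exfalso
        set a := mu / lam with ha
        have hmu' : mu = a * lam := by rw [ha, div_mul_cancel₀ mu hlam]
        have r1 : ∀ u ∈ Set.Ioi (0:ℝ),
            deriv f u + u * deriv (deriv f) u = a * deriv f u := by
          intro u hu
          have e := Ei u hu
          rw [hmu'] at e
          have : lam * (deriv f u + u * deriv (deriv f) u) = lam * (a * deriv f u) := by
            linear_combination e
          exact mul_left_cancel₀ hlam this
        have r2 : ∀ u ∈ Set.Ioi (0:ℝ),
            2 * deriv (deriv f) u + u * deriv (deriv (deriv f)) u
              = a * deriv (deriv f) u := by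
          intro u hu
          have e := Eii u hu
          rw [hmu'] at e
          have : lam * (2 * deriv (deriv f) u + u * deriv (deriv (deriv f)) u)
              = lam * (a * deriv (deriv f) u) := by linear_combination e
          exact mul_left_cancel₀ hlam this
        have hf''eq : ∀ u ∈ Set.Ioi (0:ℝ),
            deriv (deriv f) u = (a - 1) * deriv f u / u := by
          intro u hu
          have hne : u ≠ 0 := ne_of_gt hu
          have e := r1 u hu
          field_simp
          linear_combination e
        have hf'''eq : ∀ u ∈ Set.Ioi (0:ℝ),
            deriv (deriv (deriv f)) u = (a - 2) * deriv (deriv f) u / u := by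
          intro u hu
          have hne : u ≠ 0 := ne_of_gt hu
          have e := r2 u hu
          field_simp
          linear_combination e
        have ha1 : a ≠ 1 := by
          intro h
          have e := hf''eq 1 h1m
          rw [h] at e
          simp at e
          exact h2 1 h1m e
        have key : ∀ u ∈ Set.Ioi (0:ℝ),
            lam * (a - 1) * (u * deriv f u) = 2 - a := by
          intro u hu
          have hne : u ≠ 0 := ne_of_gt hu
          have hfp := h1 u hu
          have hfpp := h2 u hu
          have e := hL u hu
          simp only [Bfun] at e
          rw [hf'''eq u hu, hf''eq u hu] at e
          have hA : (a - 1) * deriv f u / u ≠ 0 := by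
            rw [← hf''eq u hu]; exact hfpp
          have ha1' : a - 1 ≠ 0 := sub_ne_zero.mpr ha1
          field_simp at e
          have hfac : (2*(a-1)*u^3*(deriv f u)^3) ≠ 0 :=
            mul_ne_zero (mul_ne_zero (mul_ne_zero two_ne_zero ha1')
              (pow_ne_zero 3 hne)) (pow_ne_zero 3 hfp)
          have hkey2 : (2*(a-1)*u^3*(deriv f u)^3) * (lam * (a - 1) * (u * deriv f u))
              = (2*(a-1)*u^3*(deriv f u)^3) * (2 - a) := by linear_combination (-(a-1)*u^3*(deriv f u)^3) * e
          exact mul_left_cancel₀ hfac hkey2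
        have HG : HasDerivAt (fun x => lam * (a - 1) * (x * deriv f x))
            (lam * (a - 1) * (1 * deriv f 1 + 1 * deriv (deriv f) 1)) 1 :=
          ((hasDerivAt_id 1).mul (hf' 1 h1m).hasDerivAt).const_mul _
        have HC : HasDerivAt (fun _ : ℝ => 2 - a) 0 1 := hasDerivAt_const _ _
        have hz := (hasDerivAt_eq_on key h1m HG).unique HC
        simp only [id_eq, one_mul] at hz
        have e1 := r1 1 h1m
        simp only [one_mul] at e1
        have ha0 : a ≠ 0 := by
          intro h
          apply hmu
          rw [hmu', h, zero_mul]
        have ha1' : a - 1 ≠ 0 := sub_ne_zero.mpr ha1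
        rcases mul_eq_zero.mp hz with h' | h'
        · rcases mul_eq_zero.mp h' with h'' | h''
          · exact hlam h''
          · exact ha1' h''
        · -- deriv f 1 + deriv (deriv f) 1 = 0, but = a * deriv f 1
          rw [e1] at h'
          rcases mul_eq_zero.mp h' with h'' | h''
          · exact ha0 h''
          · exact h1 1 h1m h''
    · -- minimal implies eigen
      intro hmin
      obtain ⟨c₁, c₂, hc, heq⟩ := min_to_log f hf hf' h1 hmin
      refine ⟨-2 / c₁, 0, fun u hu => ?_, fun u hu => ?_⟩
      · have hne : u ≠ 0 := ne_of_gt hu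
        simp only [Bfun]
        rw [log_d1 f c₁ c₂ heq u hu, log_d2 f c₁ c₂ heq u hu, log_d3 f c₁ c₂ heq u hu]
        field_simp
        ring
      · have hne : u ≠ 0 := ne_of_gt hu
        simp only [Bfun]
        rw [log_d1 f c₁ c₂ heq u hu, log_d2 f c₁ c₂ heq u hu, log_d3 f c₁ c₂ heq u hu]
        rw [zero_mul]
        field_simp
        ring
  · constructor
    · intro hmin
      exact min_to_log f hf hf' h1 hmin
    · rintro ⟨c₁, c₂, hc, heq⟩ u hu
      have hne : u ≠ 0 := ne_of_gt hu
      rw [log_d1 f c₁ c₂ heq u hu, log_d2 f c₁ c₂ heq u hu]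
      field_simp
      ring
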